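/- arXiv:1809.04031 — 4 statements merged into one kernel-verified Lean document; each statement's English description precedes it below -/
import Mathlib

section
/- Penalty method convergence: Let K be symmetric positive definite, G a matrix with full row rank, and define u_ε as the unique minimizer of C_ε(u) = (1/2)uᵀKu - Pᵀu + (ε/2)‖Gu‖². Then as ε → ∞, u_ε converges to the unique minimizer u* of C(u) = (1/2)uᵀKu - Pᵀu subject to Gu = 0. -/
open Matrix Filter

-- Rayleigh-type lower bound for a positive definite matrix
lemma posdef_alpha {n : ℕ} {K : Matrix (Fin n) (Fin n) ℝ} (hK : K.PosDef) :
    ∃ α > (0:ℝ), ∀ w : Fin n → ℝ, α * ‖w‖ ^ 2 ≤ w ⬝ᵥ K.mulVec w := by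
  have hpos : ∀ x : Fin n → ℝ, x ≠ 0 → 0 < x ⬝ᵥ K.mulVec x := by
    intro x hx
    have := hK.re_dotProduct_pos (x := x) hx
    simpa using this
  rcases isEmpty_or_nonempty (Fin n) with he | hne
  · refine ⟨1, one_pos, fun w => ?_⟩
    have hw : w = 0 := Subsingleton.elim _ _
    simp [hw, dotProduct]
  · have hnt : Nontrivial (Fin n → ℝ) := inferInstance
    have hsne : (Metric.sphere (0 : Fin n → ℝ) 1).Nonempty :=
      NormedSpace.sphere_nonempty.mpr zero_le_one
    have hf : Continuous fun w : Fin n → ℝ => w ⬝ᵥ K.mulVec w := by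
      have : (fun w : Fin n → ℝ => w ⬝ᵥ K.mulVec w)
          = fun w => ∑ i, w i * ∑ j, K i j * w j := by
        funext w; simp [dotProduct, Matrix.mulVec]
      rw [this]
      exact continuous_finset_sum _ fun i _ =>
        (continuous_apply i).mul
          (continuous_finset_sum _ fun j _ => continuous_const.mul (continuous_apply j))
    obtain ⟨x0, hx0mem, hx0min⟩ :=
      (isCompact_sphere (0 : Fin n → ℝ) 1).exists_isMinOn hsne hf.continuousOn
    have hx0norm : ‖x0‖ = 1 := by simpa using hx0mem
    have hx0ne : x0 ≠ 0 := by
      intro h; rw [h] at hx0norm; simp at hx0norm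
    refine ⟨x0 ⬝ᵥ K.mulVec x0, hpos x0 hx0ne, fun w => ?_⟩
    by_cases hw : w = 0
    · simp [hw, dotProduct]
    · have hc : 0 < ‖w‖ := norm_pos_iff.mpr hw
      set v : Fin n → ℝ := (‖w‖)⁻¹ • w with hv
      have hvnorm : ‖v‖ = 1 := by
        rw [hv, norm_smul, norm_inv, norm_norm, inv_mul_cancel₀ (ne_of_gt hc)]
      have hvmem : v ∈ Metric.sphere (0 : Fin n → ℝ) 1 := by
        simp [hvnorm]
      have hmin : x0 ⬝ᵥ K.mulVec x0 ≤ v ⬝ᵥ K.mulVec v := hx0min hvmem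
      have hwv : w = ‖w‖ • v := by
        rw [hv, smul_smul, mul_inv_cancel₀ (ne_of_gt hc), one_smul]
      have hcalc : w ⬝ᵥ K.mulVec w = ‖w‖ ^ 2 * (v ⬝ᵥ K.mulVec v) := by
        conv_lhs => rw [hwv]
        rw [Matrix.mulVec_smul, smul_dotProduct, dotProduct_smul, smul_eq_mul, smul_eq_mul]
        ring
      rw [hcalc]
      have h2 : 0 ≤ ‖w‖ ^ 2 := sq_nonneg _
      nlinarith [hmin]

-- Lagrange multiplier existence
lemma exists_lam {n m : ℕ} (G : Matrix (Fin m) (Fin n) ℝ) (r : Fin n → ℝ)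
    (h : ∀ v : Fin n → ℝ, G.mulVec v = 0 → v ⬝ᵥ r = 0) :
    ∃ lam : Fin m → ℝ, Gᵀ.mulVec lam = r := by
  set e_n := WithLp.equiv 2 (Fin n → ℝ) with he_n
  set e_m := WithLp.equiv 2 (Fin m → ℝ) with he_m
  set L := Matrix.toEuclideanLin Gᵀ with hL
  have hinner : ∀ x y : EuclideanSpace ℝ (Fin n),
      (inner ℝ x y : ℝ) = (e_n x) ⬝ᵥ (e_n y) := by
    intro x y
    simp [PiLp.inner_apply, RCLike.inner_apply, dotProduct, he_n, mul_comm]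
  have happ : ∀ y : Fin m → ℝ, e_n (L (e_m.symm y)) = Gᵀ.mulVec y := by
    intro y
    rfl
  have hr : e_n.symm r ∈ LinearMap.range L := by
    rw [← Submodule.orthogonal_orthogonal (LinearMap.range L), Submodule.mem_orthogonal]
    intro v hv
    have hkey : ∀ y : Fin m → ℝ, (Gᵀ.mulVec y) ⬝ᵥ (e_n v) = 0 := by
      intro y
      have h3 := (Submodule.mem_orthogonal _ v).mp hv (L (e_m.symm y))
        (LinearMap.mem_range_self L _)
      rw [hinner, happ] at h3
      exact h3
    have hGv : G.mulVec (e_n v) = 0 := by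
      apply dotProduct_self_eq_zero.mp
      have h4 := hkey (G.mulVec (e_n v))
      calc (G.mulVec (e_n v)) ⬝ᵥ (G.mulVec (e_n v))
          = (e_n v) ⬝ᵥ (Gᵀ.mulVec (G.mulVec (e_n v))) := by
            symm; rw [dotProduct_mulVec, vecMul_transpose]
        _ = 0 := by rw [dotProduct_comm]; exact hkey _
    rw [hinner]
    have h5 := h (e_n v) hGv
    simpa using h5
  obtain ⟨lam, hlam⟩ := hr
  refine ⟨e_m lam, ?_⟩
  have h6 := congrArg e_n hlam
  rw [hL, Equiv.apply_symm_apply] at h6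
  exact h6

/-- Penalty method convergence: the minimizer `u_ε = (K + ε GᵀG)⁻¹P` of the penalized
functional converges, as `ε → ∞`, to the unique minimizer `u*` of
`C(u) = (1/2)uᵀKu - Pᵀu` subject to `Gu = 0`. -/
theorem stmt_2 (n m : ℕ) (hmn : m ≤ n)
    (K : Matrix (Fin n) (Fin n) ℝ) (hK : K.PosDef)
    (G : Matrix (Fin m) (Fin n) ℝ) (hG : G.rank = m)
    (P : Fin n → ℝ) (C : (Fin n → ℝ) → ℝ)
    (hC : ∀ u, C u = (1 / 2) * (u ⬝ᵥ K.mulVec u) - P ⬝ᵥ u)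
    (ustar : Fin n → ℝ) (hcon : G.mulVec ustar = 0)
    (hmin : ∀ u : Fin n → ℝ, G.mulVec u = 0 → u ≠ ustar → C ustar < C u) :
    Tendsto (fun ε : ℝ => (K + ε • (Gᵀ * G))⁻¹.mulVec P) atTop (nhds ustar) := by
  have hpos : ∀ x : Fin n → ℝ, x ≠ 0 → 0 < x ⬝ᵥ K.mulVec x := by
    intro x hx
    have := hK.re_dotProduct_pos (x := x) hx
    simpa using this
  have hKt : Kᵀ = K := by
    have h1 := hK.isHermitian
    rwa [Matrix.IsHermitian, conjTranspose_eq_transpose_of_trivial] at h1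
  have hsymm : ∀ u v : Fin n → ℝ, u ⬝ᵥ K.mulVec v = v ⬝ᵥ K.mulVec u := by
    intro u v
    rw [dotProduct_mulVec, ← Matrix.mulVec_transpose, hKt, dotProduct_comm]
  -- first-order condition
  have foc : ∀ v : Fin n → ℝ, G.mulVec v = 0 → v ⬝ᵥ (K.mulVec ustar - P) = 0 := by
    intro v hv
    by_cases hv0 : v = 0
    · simp [hv0]
    set a : ℝ := v ⬝ᵥ K.mulVec ustar - P ⬝ᵥ v with ha
    set b : ℝ := v ⬝ᵥ K.mulVec v with hb
    have hbpos : 0 < b := hpos v hv0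
    have key : ∀ t : ℝ, 0 ≤ t * a + t ^ 2 / 2 * b := by
      intro t
      by_cases ht : t = 0
      · simp [ht]
      have htv : t • v ≠ 0 := smul_ne_zero ht hv0
      have hne : ustar + t • v ≠ ustar := by
        intro hcontra
        exact htv (by rwa [add_eq_left] at hcontra)
      have hGu : G.mulVec (ustar + t • v) = 0 := by
        rw [Matrix.mulVec_add, Matrix.mulVec_smul, hcon, hv]; simp
      have hlt := le_of_lt (hmin _ hGu hne)
      rw [hC, hC] at hlt
      have hexp : (1 / 2 : ℝ) * ((ustar + t • v) ⬝ᵥ K.mulVec (ustar + t • v))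
          - P ⬝ᵥ (ustar + t • v)
          = ((1 / 2 : ℝ) * (ustar ⬝ᵥ K.mulVec ustar) - P ⬝ᵥ ustar)
            + (t * a + t ^ 2 / 2 * b) := by
        rw [ha, hb]
        simp only [Matrix.mulVec_add, Matrix.mulVec_smul, dotProduct_add,
          add_dotProduct, dotProduct_smul, smul_dotProduct, smul_eq_mul]
        rw [hsymm ustar v]
        ring
      rw [hexp] at hlt
      linarith
    -- conclude a = 0
    have hb1 : 0 < b + 1 := by linarith
    set u : ℝ := a / (b + 1) with hu
    have hau : a = u * (b + 1) := by
      rw [hu]; field_simp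
    have h1 := key (-u)
    rw [hau] at h1
    have h2 : u ^ 2 * (b / 2 + 1) ≤ 0 := by nlinarith [h1]
    have h3 : u ^ 2 ≤ 0 := by nlinarith [sq_nonneg u]
    have h4 : u = 0 := by
      have := le_antisymm h3 (sq_nonneg u)
      exact (pow_eq_zero_iff two_ne_zero).mp this
    have ha0 : a = 0 := by rw [hau, h4, zero_mul]
    rw [dotProduct_sub, ← ha0, ha]
    rw [dotProduct_comm v P]
  obtain ⟨lam, hlam⟩ := exists_lam G (K.mulVec ustar - P) foc
  obtain ⟨α, hα, hαb⟩ := posdef_alpha hK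
  set c : ℝ := (lam ⬝ᵥ lam) / (4 * α) with hc
  have hlamnn : 0 ≤ lam ⬝ᵥ lam := by
    apply Finset.sum_nonneg
    intro i _
    exact mul_self_nonneg _
  have hcnn : 0 ≤ c := by positivity
  -- main convergence
  have hmain : Tendsto (fun ε : ℝ => (K + ε • (Gᵀ * G))⁻¹.mulVec P - ustar) atTop (nhds 0) := by
    apply squeeze_zero_norm' (a := fun ε : ℝ => Real.sqrt (c / ε))
    · filter_upwards [eventually_ge_atTop (1 : ℝ)] with ε hε
      have hε0 : (0:ℝ) < ε := lt_of_lt_of_le one_pos hε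
      set B := Gᵀ * G with hBdef
      have hBsemi : B.PosSemidef := by
        have h1 := Matrix.posSemidef_conjTranspose_mul_self G
        rwa [conjTranspose_eq_transpose_of_trivial] at h1
      have hsm : (ε • B).PosSemidef := by
        constructor
        · rw [Matrix.IsHermitian, conjTranspose_smul]
          rw [hBsemi.1.eq]
          norm_num
        · intro x
          exact (hBsemi.smul (le_of_lt hε0)).2 x
      have hM : (K + ε • B).PosDef := hK.add_posSemidef hsm
      set M := K + ε • B with hMdef
      have hMdet : IsUnit M.det := (Matrix.isUnit_iff_isUnit_det M).mp hM.isUnit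
      have hMP : M.mulVec (M⁻¹.mulVec P) = P := by
        rw [Matrix.mulVec_mulVec, Matrix.mul_nonsing_inv _ hMdet, Matrix.one_mulVec]
      set w : Fin n → ℝ := M⁻¹.mulVec P - ustar with hw
      have hBustar : B.mulVec ustar = 0 := by
        rw [hBdef, ← Matrix.mulVec_mulVec, hcon, Matrix.mulVec_zero]
      have hMw : M.mulVec w = -(Gᵀ.mulVec lam) := by
        rw [hw, Matrix.mulVec_sub, hMP, hMdef, Matrix.add_mulVec, smul_mulVec,
          hBustar, smul_zero, add_zero, hlam, neg_sub]
      have h2 : w ⬝ᵥ B.mulVec w = (G.mulVec w) ⬝ᵥ (G.mulVec w) := by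
        rw [hBdef, ← Matrix.mulVec_mulVec, dotProduct_mulVec, vecMul_transpose]
      have h1 : w ⬝ᵥ M.mulVec w
          = w ⬝ᵥ K.mulVec w + ε * ((G.mulVec w) ⬝ᵥ (G.mulVec w)) := by
        rw [hMdef, Matrix.add_mulVec, dotProduct_add, smul_mulVec,
          dotProduct_smul, smul_eq_mul, h2]
      have h3 : w ⬝ᵥ M.mulVec w = -((G.mulVec w) ⬝ᵥ lam) := by
        rw [hMw, dotProduct_neg, dotProduct_mulVec, vecMul_transpose]
      have hamgm : -((G.mulVec w) ⬝ᵥ lam)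
          ≤ ε * ((G.mulVec w) ⬝ᵥ (G.mulVec w)) + (lam ⬝ᵥ lam) / (4 * ε) := by
        set g := G.mulVec w with hg
        have hterm : ∀ i : Fin m,
            -(g i * lam i) ≤ ε * (g i * g i) + (lam i * lam i) / (4 * ε) := by
          intro i
          have h4e : (0:ℝ) < 4 * ε := by positivity
          have heq : ε * (g i * g i) + (lam i * lam i) / (4 * ε) + g i * lam i
              = (2 * ε * g i + lam i) ^ 2 / (4 * ε) := by
            field_simp
            ring
          nlinarith [div_nonneg (sq_nonneg (2 * ε * g i + lam i)) (le_of_lt h4e), heq]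
        calc -((g) ⬝ᵥ lam) = ∑ i, -(g i * lam i) := by
              simp [dotProduct]
          _ ≤ ∑ i, (ε * (g i * g i) + (lam i * lam i) / (4 * ε)) :=
              Finset.sum_le_sum fun i _ => hterm i
          _ = ε * (g ⬝ᵥ g) + (lam ⬝ᵥ lam) / (4 * ε) := by
              rw [Finset.sum_add_distrib, ← Finset.mul_sum, ← Finset.sum_div]
              simp [dotProduct]
      have hKw : w ⬝ᵥ K.mulVec w ≤ (lam ⬝ᵥ lam) / (4 * ε) := by
        have := h1 ▸ h3
        linarith [hamgm, h1, h3]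
      have hα1 := hαb w
      have h5 : ‖w‖ ^ 2 ≤ c / ε := by
        rw [hc, div_div]
        have h7 := le_trans hα1 hKw
        rw [le_div_iff₀ (by positivity : (0:ℝ) < 4 * ε)] at h7
        rw [le_div_iff₀ (by positivity : (0:ℝ) < 4 * α * ε)]
        nlinarith [h7]
      have h6 : ‖w‖ ≤ Real.sqrt (c / ε) := by
        have h7 := Real.sqrt_le_sqrt h5
        rwa [Real.sqrt_sq (norm_nonneg w)] at h7
      exact h6
    · have h1 : Tendsto (fun ε : ℝ => c / ε) atTop (nhds 0) :=
        Tendsto.div_atTop tendsto_const_nhds tendsto_id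
      have h2 := (Real.continuous_sqrt.tendsto 0).comp h1
      simpa [Function.comp_def] using h2
  have := hmain.add_const ustar
  simpa using this
end

section
/- The constraint penalty ‖G u_ε‖ of the penalty-method minimizer u_ε = (K + ε GᵀG)⁻¹P satisfies ‖G u_ε‖ → 0 as ε → ∞; i.e., the penalty method asymptotically enforces the constraint g(u) = Gu = 0. -/
open Matrix Filter

open scoped MatrixOrder in
private lemma coercive_aux {n : ℕ} {K : Matrix (Fin n) (Fin n) ℝ} (hK : K.PosDef) :
    ∃ c : ℝ, 0 < c ∧ ∀ x : Fin n → ℝ, c * (x ⬝ᵥ x) ≤ x ⬝ᵥ (K *ᵥ x) := by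
  set S := CFC.sqrt K with hSdef
  have hSS : S * S = K := CFC.sqrt_mul_sqrt_self K hK.posSemidef.nonneg
  have hSym : Sᵀ = S := by
    have h := (CFC.sqrt_nonneg K).posSemidef.1
    rwa [Matrix.IsHermitian, conjTranspose_eq_transpose_of_trivial] at h
  have hdet : det S ≠ 0 := by
    intro h
    have : det K = 0 := by rw [← hSS, det_mul, h, mul_zero]
    exact hK.det_pos.ne' this
  have hinv : S⁻¹ * S = 1 := nonsing_inv_mul S (Ne.isUnit hdet)
  set B := (∑ i, (∑ j, |S⁻¹ i j|) ^ 2) + 1 with hB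
  have hBpos : 0 < B := by positivity
  refine ⟨B⁻¹, by positivity, fun x => ?_⟩
  set v := S *ᵥ x with hv
  have hvv : 0 ≤ v ⬝ᵥ v := by
    unfold dotProduct
    exact Finset.sum_nonneg fun i _ => mul_self_nonneg _
  have hxv : x = S⁻¹ *ᵥ v := by
    rw [hv, mulVec_mulVec, hinv, one_mulVec]
  have hvm : x ᵥ* S = v := by
    rw [← hSym, vecMul_transpose]
  have hKx : x ⬝ᵥ (K *ᵥ x) = v ⬝ᵥ v := by
    rw [← hSS, ← mulVec_mulVec, dotProduct_mulVec, hvm]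
  have hcoord : ∀ i, |x i| ≤ (∑ j, |S⁻¹ i j|) * Real.sqrt (v ⬝ᵥ v) := by
    intro i
    have hx_i : x i = ∑ j, S⁻¹ i j * v j := by rw [hxv]; rfl
    calc |x i| = |∑ j, S⁻¹ i j * v j| := by rw [hx_i]
      _ ≤ ∑ j, |S⁻¹ i j * v j| := Finset.abs_sum_le_sum_abs _ _
      _ ≤ ∑ j, |S⁻¹ i j| * Real.sqrt (v ⬝ᵥ v) := by
          refine Finset.sum_le_sum fun j _ => ?_
          rw [abs_mul]
          refine mul_le_mul_of_nonneg_left ?_ (abs_nonneg _)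
          refine Real.abs_le_sqrt ?_
          have h5 : v j * v j ≤ ∑ k, v k * v k := by
            simpa using Finset.single_le_sum (f := fun k => v k * v k)
              (fun k _ => mul_self_nonneg _) (Finset.mem_univ j)
          rw [pow_two]
          exact h5
      _ = (∑ j, |S⁻¹ i j|) * Real.sqrt (v ⬝ᵥ v) := by rw [Finset.sum_mul]
  have hxx : x ⬝ᵥ x ≤ B * (v ⬝ᵥ v) := by
    have h1 : x ⬝ᵥ x ≤ ∑ i, ((∑ j, |S⁻¹ i j|) * Real.sqrt (v ⬝ᵥ v)) ^ 2 := by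
      have hstep : ∀ i, x i * x i ≤ ((∑ j, |S⁻¹ i j|) * Real.sqrt (v ⬝ᵥ v)) ^ 2 := by
        intro i
        have ha : (0:ℝ) ≤ (∑ j, |S⁻¹ i j|) * Real.sqrt (v ⬝ᵥ v) := by positivity
        calc x i * x i = |x i| * |x i| := (abs_mul_abs_self _).symm
          _ ≤ ((∑ j, |S⁻¹ i j|) * Real.sqrt (v ⬝ᵥ v)) *
              ((∑ j, |S⁻¹ i j|) * Real.sqrt (v ⬝ᵥ v)) :=
            mul_le_mul (hcoord i) (hcoord i) (abs_nonneg _) ha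
          _ = ((∑ j, |S⁻¹ i j|) * Real.sqrt (v ⬝ᵥ v)) ^ 2 := (pow_two _).symm
      exact Finset.sum_le_sum fun i _ => hstep i
    have h2 : ∑ i, ((∑ j, |S⁻¹ i j|) * Real.sqrt (v ⬝ᵥ v)) ^ 2
        = (∑ i, (∑ j, |S⁻¹ i j|) ^ 2) * (v ⬝ᵥ v) := by
      rw [Finset.sum_mul]
      refine Finset.sum_congr rfl fun i _ => ?_
      rw [mul_pow, Real.sq_sqrt hvv]
    have h3 : (∑ i, (∑ j, |S⁻¹ i j|) ^ 2) * (v ⬝ᵥ v) ≤ B * (v ⬝ᵥ v) := by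
      refine mul_le_mul_of_nonneg_right ?_ hvv
      rw [hB]; linarith
    calc x ⬝ᵥ x ≤ ∑ i, ((∑ j, |S⁻¹ i j|) * Real.sqrt (v ⬝ᵥ v)) ^ 2 := h1
      _ = (∑ i, (∑ j, |S⁻¹ i j|) ^ 2) * (v ⬝ᵥ v) := h2
      _ ≤ B * (v ⬝ᵥ v) := h3
  rw [hKx, inv_mul_le_iff₀ hBpos]
  exact hxx

/-- The constraint violation `‖G u_ε‖` of the penalty-method minimizer
`u_ε = (K + ε GᵀG)⁻¹P` tends to `0` as `ε → ∞`. -/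
theorem stmt_4 (n m : ℕ) (K : Matrix (Fin n) (Fin n) ℝ) (hK : K.PosDef)
    (G : Matrix (Fin m) (Fin n) ℝ) (P : Fin n → ℝ) :
    Tendsto (fun ε : ℝ => ‖G.mulVec ((K + ε • (Gᵀ * G))⁻¹.mulVec P)‖)
      atTop (nhds 0) := by
  obtain ⟨c, hc, hco⟩ := coercive_aux hK
  have hPP : 0 ≤ P ⬝ᵥ P := by
    unfold dotProduct
    exact Finset.sum_nonneg fun i _ => mul_self_nonneg _
  set D := (P ⬝ᵥ P) / c with hD
  have hDnn : 0 ≤ D := div_nonneg hPP hc.le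
  have key : ∀ ε : ℝ, 0 < ε →
      ‖G.mulVec ((K + ε • (Gᵀ * G))⁻¹.mulVec P)‖ ≤ Real.sqrt (D / ε) := by
    intro ε hε
    have hGG : (Gᵀ * G).PosSemidef := by
      have h := posSemidef_conjTranspose_mul_self (R := ℝ) G
      rwa [conjTranspose_eq_transpose_of_trivial] at h
    have hsm : (ε • (Gᵀ * G)).PosSemidef := by
      refine .of_dotProduct_mulVec_nonneg ?_ fun x => ?_
      · show (ε • (Gᵀ * G))ᴴ = ε • (Gᵀ * G)
        rw [conjTranspose_smul, star_trivial, hGG.1]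
      · rw [smul_mulVec, dotProduct_smul, smul_eq_mul]
        exact mul_nonneg hε.le (hGG.dotProduct_mulVec_nonneg x)
    set A := K + ε • (Gᵀ * G) with hA
    have hApd : A.PosDef := hK.add_posSemidef hsm
    set u := A⁻¹ *ᵥ P with hu
    have hAu : A *ᵥ u = P := by
      rw [hu, mulVec_mulVec, mul_nonsing_inv _ (isUnit_iff_isUnit_det A |>.1 hApd.isUnit),
        one_mulVec]
    set w := G *ᵥ u with hw
    have hww : 0 ≤ w ⬝ᵥ w := by
      unfold dotProduct
      exact Finset.sum_nonneg fun i _ => mul_self_nonneg _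
    have huu : 0 ≤ u ⬝ᵥ u := by
      unfold dotProduct
      exact Finset.sum_nonneg fun i _ => mul_self_nonneg _
    have hq : u ⬝ᵥ (Gᵀ *ᵥ (G *ᵥ u)) = w ⬝ᵥ w := by
      rw [dotProduct_mulVec, vecMul_transpose]
    have hsplit : u ⬝ᵥ P = u ⬝ᵥ (K *ᵥ u) + ε * (w ⬝ᵥ w) := by
      conv_lhs => rw [← hAu]
      rw [hA, add_mulVec, dotProduct_add, smul_mulVec, dotProduct_smul, smul_eq_mul,
        ← mulVec_mulVec, hq]
    have hCS : u ⬝ᵥ P ≤ Real.sqrt (u ⬝ᵥ u) * Real.sqrt (P ⬝ᵥ P) := by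
      have h := Finset.sum_mul_sq_le_sq_mul_sq Finset.univ u P
      have h2 : (u ⬝ᵥ P) ^ 2 ≤ (u ⬝ᵥ u) * (P ⬝ᵥ P) := by
        simpa [dotProduct, pow_two] using h
      calc u ⬝ᵥ P ≤ |u ⬝ᵥ P| := le_abs_self _
        _ ≤ Real.sqrt ((u ⬝ᵥ u) * (P ⬝ᵥ P)) := Real.abs_le_sqrt h2
        _ = Real.sqrt (u ⬝ᵥ u) * Real.sqrt (P ⬝ᵥ P) := Real.sqrt_mul huu _
    set su := Real.sqrt (u ⬝ᵥ u) with hsu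
    set sP := Real.sqrt (P ⬝ᵥ P) with hsP
    have hsu2 : su ^ 2 = u ⬝ᵥ u := Real.sq_sqrt huu
    have hsP2 : sP ^ 2 = P ⬝ᵥ P := Real.sq_sqrt hPP
    have hKu : c * (u ⬝ᵥ u) ≤ u ⬝ᵥ (K *ᵥ u) := hco u
    have hbound : ε * (w ⬝ᵥ w) ≤ D := by
      have h1 : ε * (w ⬝ᵥ w) ≤ su * sP - c * su ^ 2 := by
        rw [hsu2]; linarith [hCS, hKu, hsplit]
      have h2 : su * sP - c * su ^ 2 ≤ sP ^ 2 / c := by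
        rw [le_div_iff₀ hc]
        nlinarith [sq_nonneg (c * su - sP), mul_nonneg (mul_nonneg hc.le (Real.sqrt_nonneg (u ⬝ᵥ u))) (Real.sqrt_nonneg (P ⬝ᵥ P))]
      rw [hD, ← hsP2]
      linarith
    have hwD : w ⬝ᵥ w ≤ D / ε := by
      rw [le_div_iff₀ hε]; linarith [hbound]
    show ‖w‖ ≤ Real.sqrt (D / ε)
    refine (pi_norm_le_iff_of_nonneg (Real.sqrt_nonneg _)).2 fun i => ?_
    rw [Real.norm_eq_abs]
    refine Real.abs_le_sqrt ?_
    refine le_trans ?_ hwD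
    have h6 : w i * w i ≤ ∑ k, w k * w k := by
      simpa using Finset.single_le_sum (f := fun k => w k * w k)
        (fun k _ => mul_self_nonneg _) (Finset.mem_univ i)
    rw [pow_two]
    exact h6
  have h1 : Tendsto (fun ε : ℝ => D / ε) atTop (nhds 0) :=
    tendsto_const_nhds.div_atTop tendsto_id
  have h2 : Tendsto (fun ε : ℝ => Real.sqrt (D / ε)) atTop (nhds 0) :=
    (Real.continuous_sqrt.tendsto' 0 0 Real.sqrt_zero).comp h1
  exact squeeze_zero' (Eventually.of_forall fun ε => norm_nonneg _)
    ((eventually_gt_atTop 0).mono fun ε hε => key ε hε) h2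
end

section
/- Augmented Lagrangian multiplier update convergence: define u^k as the minimizer of L(u, λ^k) = (1/2)uᵀKu - Pᵀu + (λ^k)ᵀGu + (ε/2)‖Gu‖² and λ^{k+1} = λ^k + ε G u^k. If K is symmetric positive definite, G has full row rank, and ε > 0, then λ^k converges to the exact Lagrange multiplier λ* and u^k converges to the constrained minimizer u*, for any initial λ⁰. -/
open Matrix Filter

lemma aux_quad_zero (a b : ℝ) (h : ∀ t : ℝ, 0 ≤ a * (t * t) + b * t) : b = 0 := by
  have hd := discrim_le_zero (a := a) (b := b) (c := 0) (fun x => by simpa using h x)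
  simp only [discrim, mul_zero, sub_zero] at hd
  nlinarith [sq_nonneg b]

lemma aux_symm_dot {n : ℕ} (K : Matrix (Fin n) (Fin n) ℝ) (hK : Kᵀ = K) (x y : Fin n → ℝ) :
    x ⬝ᵥ K *ᵥ y = y ⬝ᵥ K *ᵥ x := by
  rw [dotProduct_mulVec]
  nth_rewrite 1 [← hK]
  rw [vecMul_transpose, dotProduct_comm]

lemma aux_dot_transpose {m n : ℕ} (G : Matrix (Fin m) (Fin n) ℝ) (x : Fin n → ℝ) (y : Fin m → ℝ) :
    x ⬝ᵥ Gᵀ *ᵥ y = (G *ᵥ x) ⬝ᵥ y := by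
  rw [dotProduct_mulVec, vecMul_transpose]

lemma aux_cs {m : ℕ} (T : Matrix (Fin m) (Fin m) ℝ) (hT : Tᵀ = T)
    (hpsd : ∀ z, 0 ≤ z ⬝ᵥ T *ᵥ z) (x y : Fin m → ℝ) :
    (x ⬝ᵥ T *ᵥ y) ^ 2 ≤ (x ⬝ᵥ T *ᵥ x) * (y ⬝ᵥ T *ᵥ y) := by
  have h : ∀ t : ℝ, 0 ≤ (y ⬝ᵥ T *ᵥ y) * (t * t) + (2 * (x ⬝ᵥ T *ᵥ y)) * t + (x ⬝ᵥ T *ᵥ x) := by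
    intro t
    have h0 := hpsd (x + t • y)
    have hsym : y ⬝ᵥ T *ᵥ x = x ⬝ᵥ T *ᵥ y := aux_symm_dot T hT y x
    simp only [mulVec_add, mulVec_smul, dotProduct_add, add_dotProduct, dotProduct_smul,
      smul_dotProduct, smul_eq_mul, hsym] at h0
    nlinarith [h0]
  have hd := discrim_le_zero h
  simp only [discrim] at hd
  nlinarith [hd]

lemma aux_entry_bound {m : ℕ} (S : Matrix (Fin m) (Fin m) ℝ) (x : Fin m → ℝ) :
    x ⬝ᵥ S *ᵥ x ≤ (∑ i, ∑ j, |S i j|) * (x ⬝ᵥ x) := by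
  have hsq : ∀ i : Fin m, (x i) * (x i) ≤ x ⬝ᵥ x := by
    intro i
    have : ∀ j ∈ Finset.univ, 0 ≤ x j * x j := fun j _ => mul_self_nonneg _
    simpa [dotProduct] using Finset.single_le_sum this (Finset.mem_univ i)
  have hxx : ∀ i j : Fin m, |x i| * |x j| ≤ x ⬝ᵥ x := by
    intro i j
    nlinarith [sq_nonneg (|x i| - |x j|), hsq i, hsq j, abs_mul_abs_self (x i),
      abs_mul_abs_self (x j)]
  calc x ⬝ᵥ S *ᵥ x = ∑ i, ∑ j, x i * (S i j * x j) := by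
        simp [dotProduct, Matrix.mulVec, Finset.mul_sum]
    _ ≤ ∑ i, ∑ j, |S i j| * (x ⬝ᵥ x) := by
        refine Finset.sum_le_sum fun i _ => Finset.sum_le_sum fun j _ => ?_
        calc x i * (S i j * x j) ≤ |x i * (S i j * x j)| := le_abs_self _
          _ = |S i j| * (|x i| * |x j|) := by rw [abs_mul, abs_mul]; ring
          _ ≤ |S i j| * (x ⬝ᵥ x) := by
              exact mul_le_mul_of_nonneg_left (hxx i j) (abs_nonneg _)
    _ = (∑ i, ∑ j, |S i j|) * (x ⬝ᵥ x) := by rw [Finset.sum_mul]; simp [Finset.sum_mul]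

lemma aux_coercive {m : ℕ} (T : Matrix (Fin m) (Fin m) ℝ) (hT : T.PosDef) :
    ∃ c : ℝ, 0 < c ∧ ∀ x, c * (x ⬝ᵥ x) ≤ x ⬝ᵥ T *ᵥ x := by
  classical
  have hTt : Tᵀ = T := by
    have := hT.1
    rwa [Matrix.IsHermitian, conjTranspose_eq_transpose_of_trivial] at this
  have hpsd : ∀ z, 0 ≤ z ⬝ᵥ T *ᵥ z := by
    intro z
    have := hT.posSemidef.dotProduct_mulVec_nonneg z
    simpa using this
  set S := T⁻¹ with hS
  set C : ℝ := (∑ i, ∑ j, |S i j|) + 1 with hC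
  have hC0 : 0 < C := by
    have : 0 ≤ ∑ i, ∑ j, |S i j| :=
      Finset.sum_nonneg fun i _ => Finset.sum_nonneg fun j _ => abs_nonneg _
    linarith
  refine ⟨1 / C, by positivity, fun x => ?_⟩
  by_cases hx : x = 0
  · simp [hx]
  · have hxx : 0 < x ⬝ᵥ x := by
      rcases lt_or_eq_of_le (Finset.sum_nonneg fun i _ => mul_self_nonneg (x i) : (0:ℝ) ≤ x ⬝ᵥ x) with h | h
      · exact h
      · exact absurd (dotProduct_self_eq_zero.mp h.symm) hx
    have hTS : T *ᵥ (S *ᵥ x) = x := by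
      rw [mulVec_mulVec, hS, Matrix.mul_nonsing_inv _ (isUnit_iff_ne_zero.mpr hT.det_pos.ne'), one_mulVec]
    have hcs := aux_cs T hTt hpsd x (S *ᵥ x)
    rw [hTS] at hcs
    have hSx : (S *ᵥ x) ⬝ᵥ x = x ⬝ᵥ S *ᵥ x := dotProduct_comm _ _
    rw [hSx] at hcs
    have hbound : x ⬝ᵥ S *ᵥ x ≤ C * (x ⬝ᵥ x) := by
      have := aux_entry_bound S x
      have h2 : (∑ i, ∑ j, |S i j|) * (x ⬝ᵥ x) ≤ C * (x ⬝ᵥ x) := by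
        apply mul_le_mul_of_nonneg_right _ (le_of_lt hxx)
        linarith
      linarith
    have hTx : 0 ≤ x ⬝ᵥ T *ᵥ x := hpsd x
    rw [div_mul_eq_mul_div, div_le_iff₀ hC0]
    nlinarith [hcs, hbound, hTx, hxx]
/-- Augmented Lagrangian convergence: with `u^k` the minimizer of
`L(u,λ^k) = (1/2)uᵀKu - Pᵀu + (λ^k)ᵀGu + (ε/2)‖Gu‖²` and the update
`λ^{k+1} = λ^k + ε G u^k`, if `K` is symmetric positive definite, `G` has full row rank
and `ε > 0`, then `λ^k → λ*` and `u^k → u*`, the unique solution of the saddle system,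
for any initial `λ⁰`. -/
theorem stmt_7 (n m : ℕ) (K : Matrix (Fin n) (Fin n) ℝ) (hK : K.PosDef)
    (G : Matrix (Fin m) (Fin n) ℝ) (hG : G.rank = m)
    (P : Fin n → ℝ) (ε : ℝ) (hε : 0 < ε)
    (L : (Fin n → ℝ) → (Fin m → ℝ) → ℝ)
    (hL : ∀ u lam, L u lam = (1 / 2) * (u ⬝ᵥ K.mulVec u) - P ⬝ᵥ u
      + lam ⬝ᵥ G.mulVec u + (ε / 2) * (G.mulVec u ⬝ᵥ G.mulVec u))
    (u : ℕ → Fin n → ℝ) (lam : ℕ → Fin m → ℝ)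
    (hmin : ∀ k, ∀ v : Fin n → ℝ, L (u k) (lam k) ≤ L v (lam k))
    (hupd : ∀ k, lam (k + 1) = lam k + ε • G.mulVec (u k))
    (ustar : Fin n → ℝ) (lamstar : Fin m → ℝ)
    (hsys₁ : K.mulVec ustar + Gᵀ.mulVec lamstar = P)
    (hsys₂ : G.mulVec ustar = 0) :
    Tendsto lam atTop (nhds lamstar) ∧ Tendsto u atTop (nhds ustar) := by
  classical
  have hKt : Kᵀ = K := by
    have h := hK.1
    rwa [Matrix.IsHermitian, conjTranspose_eq_transpose_of_trivial] at h
  set A : Matrix (Fin n) (Fin n) ℝ := K + ε • (Gᵀ * G) with hA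
  set e : ℕ → Fin m → ℝ := fun k => lam k - lamstar with he
  set d : ℕ → Fin n → ℝ := fun k => u k - ustar with hd
  -- Step 1: first-order optimality condition
  have hKey : ∀ k, A *ᵥ u k = P - Gᵀ *ᵥ lam k := by
    intro k
    set w : Fin n → ℝ := K *ᵥ u k + Gᵀ *ᵥ lam k + ε • (Gᵀ *ᵥ (G *ᵥ u k)) - P with hw
    have hb : ∀ v : Fin n → ℝ, v ⬝ᵥ w = 0 := by
      intro v
      apply aux_quad_zero ((1/2) * (v ⬝ᵥ K *ᵥ v) + (ε/2) * ((G *ᵥ v) ⬝ᵥ (G *ᵥ v)))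
      intro t
      have hmin' := hmin k (u k + t • v)
      rw [hL, hL] at hmin'
      have h1 : v ⬝ᵥ K *ᵥ u k = u k ⬝ᵥ K *ᵥ v := aux_symm_dot K hKt v (u k)
      have h2 : v ⬝ᵥ Gᵀ *ᵥ lam k = lam k ⬝ᵥ G *ᵥ v := by
        rw [aux_dot_transpose, dotProduct_comm]
      have h3 : v ⬝ᵥ Gᵀ *ᵥ (G *ᵥ u k) = (G *ᵥ u k) ⬝ᵥ (G *ᵥ v) := by
        rw [aux_dot_transpose, dotProduct_comm]
      have h4 : (G *ᵥ v) ⬝ᵥ (G *ᵥ u k) = (G *ᵥ u k) ⬝ᵥ (G *ᵥ v) := dotProduct_comm _ _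
      have h5 : v ⬝ᵥ P = P ⬝ᵥ v := dotProduct_comm _ _
      have hexp : ((1/2) * (v ⬝ᵥ K *ᵥ v) + (ε/2) * ((G *ᵥ v) ⬝ᵥ (G *ᵥ v))) * (t * t)
            + (v ⬝ᵥ w) * t
          = ((1 / 2) * ((u k + t • v) ⬝ᵥ K.mulVec (u k + t • v)) - P ⬝ᵥ (u k + t • v)
              + lam k ⬝ᵥ G.mulVec (u k + t • v)
              + (ε / 2) * (G.mulVec (u k + t • v) ⬝ᵥ G.mulVec (u k + t • v)))
            - ((1 / 2) * (u k ⬝ᵥ K.mulVec (u k)) - P ⬝ᵥ u k + lam k ⬝ᵥ G.mulVec (u k)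
              + (ε / 2) * (G.mulVec (u k) ⬝ᵥ G.mulVec (u k))) := by
        simp only [hw, mulVec_add, mulVec_smul, dotProduct_add, add_dotProduct,
          dotProduct_smul, smul_dotProduct, smul_eq_mul, dotProduct_sub, sub_dotProduct,
          h1, h2, h3, h4, h5]
        ring
      linarith [hmin', hexp]
    have hw0 : w = 0 := dotProduct_self_eq_zero.mp (hb w)
    have h6 : K *ᵥ u k + Gᵀ *ᵥ lam k + ε • (Gᵀ *ᵥ (G *ᵥ u k)) = P := by
      rw [hw, sub_eq_zero] at hw0
      exact hw0
    have hAu : A *ᵥ u k = K *ᵥ u k + ε • (Gᵀ *ᵥ (G *ᵥ u k)) := by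
      rw [hA, add_mulVec, smul_mulVec, ← mulVec_mulVec]
    rw [hAu, eq_sub_iff_add_eq, ← h6]
    abel
  -- Step 2: saddle point satisfies same equation
  have hstar : A *ᵥ ustar = P - Gᵀ *ᵥ lamstar := by
    rw [hA, add_mulVec, smul_mulVec, ← mulVec_mulVec, hsys₂, mulVec_zero, smul_zero,
      add_zero, eq_sub_iff_add_eq, hsys₁]
  have hAd : ∀ k, A *ᵥ d k = -(Gᵀ *ᵥ e k) := by
    intro k
    show A *ᵥ (u k - ustar) = -(Gᵀ *ᵥ (lam k - lamstar))
    rw [mulVec_sub, hKey k, hstar, mulVec_sub]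
    abel
  -- K inverse facts
  have hKdet : IsUnit K.det := isUnit_iff_ne_zero.mpr hK.det_pos.ne'
  have hKinv : ∀ x, K⁻¹ *ᵥ (K *ᵥ x) = x := fun x => by
    rw [mulVec_mulVec, Matrix.nonsing_inv_mul _ hKdet, one_mulVec]
  set T : Matrix (Fin m) (Fin m) ℝ := G * K⁻¹ * Gᵀ with hT
  have hTapp : ∀ y, T *ᵥ y = G *ᵥ (K⁻¹ *ᵥ (Gᵀ *ᵥ y)) := fun y => by
    rw [hT, mulVec_mulVec, mulVec_mulVec]
  -- Step 3: the key recurrence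
  have hrec : ∀ k, e (k + 1) + ε • (T *ᵥ e (k + 1)) = e k := by
    intro k
    have he1 : e (k + 1) = e k + ε • (G *ᵥ d k) := by
      show lam (k+1) - lamstar = (lam k - lamstar) + ε • (G *ᵥ (u k - ustar))
      rw [hupd k, mulVec_sub, hsys₂, sub_zero]
      abel
    have hGe : Gᵀ *ᵥ e k = -(K *ᵥ d k) - ε • (Gᵀ *ᵥ (G *ᵥ d k)) := by
      have h0 := hAd k
      rw [hA, add_mulVec, smul_mulVec, ← mulVec_mulVec] at h0
      rw [← neg_neg (Gᵀ *ᵥ e k), ← h0]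
      abel
    have hTe1 : T *ᵥ e (k + 1) = -(G *ᵥ d k) := by
      rw [he1, mulVec_add, mulVec_smul, hTapp, hTapp, hGe]
      simp only [mulVec_sub, mulVec_neg, mulVec_smul, hKinv]
      abel
    rw [hTe1, he1, smul_neg]
    abel
  -- Step 4: G transpose injective
  have hGinj : ∀ x : Fin m → ℝ, x ≠ 0 → Gᵀ *ᵥ x ≠ 0 := by
    intro x hx hcon
    have hli : LinearIndependent ℝ (fun i => G i) := by
      rw [linearIndependent_iff_card_eq_finrank_span]
      have := G.rank_eq_finrank_span_row
      rw [hG] at this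
      simp [Set.finrank, Matrix.row] at this ⊢; exact this
    have hinj : Function.Injective fun v => v ᵥ* G := Matrix.vecMul_injective_iff.mpr hli
    apply hx
    apply hinj
    show x ᵥ* G = 0 ᵥ* G
    rw [← mulVec_transpose, ← mulVec_transpose, hcon, mulVec_zero]
  -- Step 5: T is positive definite
  have hTpos : T.PosDef := by
    refine Matrix.PosDef.of_dotProduct_mulVec_pos ?_ ?_
    · rw [Matrix.IsHermitian, conjTranspose_eq_transpose_of_trivial, hT, transpose_mul,
        transpose_mul, transpose_transpose, Matrix.transpose_nonsing_inv, hKt, Matrix.mul_assoc]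
    · intro x hx
      have hstarx : star x = x := funext fun i => star_trivial _
      rw [hstarx, hTapp, dotProduct_mulVec, ← mulVec_transpose]
      have := hK.inv.dotProduct_mulVec_pos (hGinj x hx)
      have hstarg : star (Gᵀ *ᵥ x) = Gᵀ *ᵥ x := funext fun i => star_trivial _
      rwa [hstarg] at this
  obtain ⟨c, hc0, hc⟩ := aux_coercive T hTpos
  -- Step 6: norm decay
  set N : ℕ → ℝ := fun k => e k ⬝ᵥ e k with hN
  have hNnn : ∀ k, 0 ≤ N k := fun k => Finset.sum_nonneg fun i _ => mul_self_nonneg _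
  have hden : (0:ℝ) < 1 + 2 * ε * c := by nlinarith
  set r : ℝ := 1 / (1 + 2 * ε * c) with hr
  have hr0 : 0 ≤ r := by positivity
  have hr1 : r < 1 := by
    rw [hr, div_lt_one hden]
    nlinarith
  have hNrec : ∀ k, N (k + 1) ≤ r * N k := by
    intro k
    have hcomm : (T *ᵥ e (k+1)) ⬝ᵥ e (k+1) = e (k+1) ⬝ᵥ (T *ᵥ e (k+1)) := dotProduct_comm _ _
    have hexp : N k = N (k+1) + 2 * ε * (e (k+1) ⬝ᵥ T *ᵥ e (k+1))
        + ε^2 * ((T *ᵥ e (k+1)) ⬝ᵥ (T *ᵥ e (k+1))) := by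
      show e k ⬝ᵥ e k = _
      conv_lhs => rw [← hrec k]
      simp only [dotProduct_add, add_dotProduct, dotProduct_smul, smul_dotProduct,
        smul_eq_mul, hcomm]
      ring
    have h1 : 0 ≤ (T *ᵥ e (k+1)) ⬝ᵥ (T *ᵥ e (k+1)) :=
      Finset.sum_nonneg fun i _ => mul_self_nonneg _
    have h2 := hc (e (k+1))
    have h3 : N (k+1) * (1 + 2 * ε * c) ≤ N k := by nlinarith
    rw [hr, div_mul_eq_mul_div, le_div_iff₀ hden]
    linarith [h3]
  have hNbound : ∀ k, N k ≤ N 0 * r ^ k := by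
    intro k
    induction k with
    | zero => simp
    | succ k ih =>
      calc N (k+1) ≤ r * N k := hNrec k
        _ ≤ r * (N 0 * r ^ k) := mul_le_mul_of_nonneg_left ih hr0
        _ = N 0 * r ^ (k+1) := by ring
  have hNtend : Tendsto N atTop (nhds 0) := by
    have hgeo : Tendsto (fun k => N 0 * r ^ k) atTop (nhds 0) := by
      rw [show (0:ℝ) = N 0 * 0 by ring]
      exact (tendsto_pow_atTop_nhds_zero_of_lt_one hr0 hr1).const_mul (N 0)
    exact squeeze_zero hNnn hNbound hgeo
  have hetend : Tendsto e atTop (nhds 0) := by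
    rw [tendsto_pi_nhds]
    intro i
    have hb : ∀ k, ‖e k i‖ ≤ Real.sqrt (N k) := by
      intro k
      rw [Real.norm_eq_abs, ← Real.sqrt_sq_eq_abs]
      apply Real.sqrt_le_sqrt
      have hterms : ∀ j ∈ Finset.univ, 0 ≤ e k j * e k j := fun j _ => mul_self_nonneg _
      have h := Finset.single_le_sum hterms (Finset.mem_univ i)
      simpa [sq, hN, dotProduct] using h
    have hsq : Tendsto (fun k => Real.sqrt (N k)) atTop (nhds 0) := by
      rw [← Real.sqrt_zero]
      exact (Real.continuous_sqrt.tendsto 0).comp hNtend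
    simpa using squeeze_zero_norm hb hsq
  have hlam : Tendsto lam atTop (nhds lamstar) := by
    have hlameq : lam = fun k => e k + lamstar := by
      funext k
      show lam k = (lam k - lamstar) + lamstar
      abel
    rw [hlameq]
    simpa using hetend.add (tendsto_const_nhds (x := lamstar))
  -- Step 7: u converges
  have hApos : A.PosDef := by
    refine Matrix.PosDef.of_dotProduct_mulVec_pos ?_ ?_
    · rw [Matrix.IsHermitian, conjTranspose_eq_transpose_of_trivial, hA, transpose_add,
        transpose_smul, transpose_mul, transpose_transpose, hKt]
    · intro x hx
      have h1 := hK.dotProduct_mulVec_pos hx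
      have hstarx : star x = x := funext fun i => star_trivial _
      rw [hstarx] at h1 ⊢
      have h2 : (0:ℝ) ≤ (G *ᵥ x) ⬝ᵥ (G *ᵥ x) := Finset.sum_nonneg fun i _ => mul_self_nonneg _
      rw [hA, add_mulVec, smul_mulVec, ← mulVec_mulVec, dotProduct_add, dotProduct_smul,
        smul_eq_mul, aux_dot_transpose]
      nlinarith
  have hAdet : IsUnit A.det := isUnit_iff_ne_zero.mpr hApos.det_pos.ne'
  have hdexp : ∀ k, d k = -((A⁻¹ * Gᵀ) *ᵥ e k) := by
    intro k
    have h0 := congrArg (fun z => A⁻¹ *ᵥ z) (hAd k)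
    rwa [mulVec_mulVec, Matrix.nonsing_inv_mul _ hAdet, one_mulVec, mulVec_neg,
      mulVec_mulVec] at h0
  have hdtend : Tendsto d atTop (nhds 0) := by
    have hcont : Continuous fun x : Fin m → ℝ => -((A⁻¹ * Gᵀ) *ᵥ x) :=
      (continuous_const.matrix_mulVec continuous_id).neg
    have h1 := (hcont.tendsto 0).comp hetend
    simp only [mulVec_zero, neg_zero] at h1
    have hde : d = fun k => -((A⁻¹ * Gᵀ) *ᵥ e k) := funext hdexp
    rw [hde]
    exact h1
  have hu : Tendsto u atTop (nhds ustar) := by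
    have hueq : u = fun k => d k + ustar := by
      funext k
      show u k = (u k - ustar) + ustar
      abel
    rw [hueq]
    simpa using hdtend.add (tendsto_const_nhds (x := ustar))
  exact ⟨hlam, hu⟩
end

section
/- In the augmented Lagrangian iteration, the multiplier error satisfies λ^{k+1} - λ* = M(λ^k - λ*) where M = I - ε G(K + ε GᵀG)⁻¹Gᵀ, and the spectral radius of M is strictly less than 1 for any ε > 0 when K is symmetric positive definite and G has full row rank. -/
open Matrix
open scoped ComplexOrder

private lemma ker_transpose_full_rank {m n : ℕ} (G : Matrix (Fin m) (Fin n) ℝ)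
    (hG : G.rank = m) : ∀ y : Fin m → ℝ, Gᵀ *ᵥ y = 0 → y = 0 := by
  intro y hy
  have hr : Gᵀ.rank = m := by rw [G.rank_transpose]; exact hG
  have hker : LinearMap.ker Gᵀ.mulVecLin = ⊥ := by
    have h2 := Gᵀ.mulVecLin.finrank_range_add_finrank_ker
    rw [Matrix.rank] at hr
    rw [hr] at h2
    simp only [Module.finrank_pi, Fintype.card_fin] at h2
    have : Module.finrank ℝ (LinearMap.ker Gᵀ.mulVecLin) = 0 := by omega
    exact Submodule.finrank_eq_zero.mp this
  exact LinearMap.ker_eq_bot.mp hker (by rw [mulVecLin_apply, hy, mulVecLin_apply, mulVec_zero])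

/-- In the augmented Lagrangian iteration the multiplier error satisfies
`λ^{k+1} - λ* = M (λ^k - λ*)` with `M = I - ε G (K + ε GᵀG)⁻¹ Gᵀ`, and the spectral
radius of `M` is strictly less than `1` for any `ε > 0`. -/
theorem stmt_8 (n m : ℕ) (K : Matrix (Fin n) (Fin n) ℝ) (hK : K.PosDef)
    (G : Matrix (Fin m) (Fin n) ℝ) (hG : G.rank = m)
    (P : Fin n → ℝ) (ε : ℝ) (hε : 0 < ε)
    (u : ℕ → Fin n → ℝ) (lam : ℕ → Fin m → ℝ)
    (hu : ∀ k, u k = (K + ε • (Gᵀ * G))⁻¹.mulVec (P - Gᵀ.mulVec (lam k)))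
    (hupd : ∀ k, lam (k + 1) = lam k + ε • G.mulVec (u k))
    (ustar : Fin n → ℝ) (lamstar : Fin m → ℝ)
    (hsys₁ : K.mulVec ustar + Gᵀ.mulVec lamstar = P)
    (hsys₂ : G.mulVec ustar = 0)
    (M : Matrix (Fin m) (Fin m) ℝ)
    (hM : M = 1 - ε • (G * (K + ε • (Gᵀ * G))⁻¹ * Gᵀ)) :
    (∀ k, lam (k + 1) - lamstar = M.mulVec (lam k - lamstar)) ∧
    (∀ μ ∈ spectrum ℂ (M.map (Complex.ofReal)), ‖μ‖ < 1) := by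
  classical
  set A := K + ε • (Gᵀ * G) with hAdef
  have hGT := ker_transpose_full_rank G hG
  -- A is positive definite
  have hpsd : (ε • (Gᵀ * G)).PosSemidef := by
    have h0 : (Gᵀ * G).PosSemidef := by
      have := posSemidef_conjTranspose_mul_self (R := ℝ) G
      rwa [conjTranspose_eq_transpose_of_trivial] at this
    refine PosSemidef.of_dotProduct_mulVec_nonneg ?_ (fun x => ?_)
    · unfold Matrix.IsHermitian
      rw [conjTranspose_smul, h0.1]
      simp
    · rw [smul_mulVec, dotProduct_smul, smul_eq_mul]
      exact mul_nonneg hε.le (h0.dotProduct_mulVec_nonneg x)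
  have hA : A.PosDef := hK.add_posSemidef hpsd
  have hAdet : IsUnit A.det := hA.det_pos.ne'.isUnit
  have hAinv : A * A⁻¹ = 1 := mul_nonsing_inv A hAdet
  have hinvA : A⁻¹ * A = 1 := nonsing_inv_mul A hAdet
  have hAsymm : Aᵀ = A := by
    have := hA.isHermitian
    rwa [Matrix.IsHermitian, conjTranspose_eq_transpose_of_trivial] at this
  -- Part 1
  have hAu : A *ᵥ ustar = P - Gᵀ *ᵥ lamstar := by
    rw [hAdef, add_mulVec, smul_mulVec, ← mulVec_mulVec, hsys₂, mulVec_zero, smul_zero,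
      add_zero, ← hsys₁]
    abel
  have key : ∀ k, lam (k + 1) - lamstar = M *ᵥ (lam k - lamstar) := by
    intro k
    have hu' : u k = ustar - A⁻¹ *ᵥ (Gᵀ *ᵥ (lam k - lamstar)) := by
      rw [hu k]
      have : P - Gᵀ *ᵥ lam k = A *ᵥ ustar - Gᵀ *ᵥ (lam k - lamstar) := by
        rw [hAu, mulVec_sub]
        abel
      rw [this, mulVec_sub, mulVec_mulVec, hinvA, one_mulVec]
    rw [hupd k, hu', hM, sub_mulVec, one_mulVec, mulVec_sub, hsys₂, zero_sub,
      smul_neg, smul_mulVec, mulVec_mulVec, mulVec_mulVec, Matrix.mul_assoc]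
    abel
  refine ⟨key, ?_⟩
  -- symmetry of M
  have hMsymm : Mᵀ = M := by
    rw [hM, transpose_sub, transpose_one, transpose_smul, transpose_mul, transpose_mul,
      transpose_transpose, transpose_nonsing_inv, hAsymm, Matrix.mul_assoc]
  -- 1 - M is positive definite
  have hq : ∀ x : Fin m → ℝ, x ⬝ᵥ (G * A⁻¹ * Gᵀ) *ᵥ x = (Gᵀ *ᵥ x) ⬝ᵥ A⁻¹ *ᵥ (Gᵀ *ᵥ x) := by
    intro x
    rw [← mulVec_mulVec, ← mulVec_mulVec, dotProduct_mulVec x G, ← mulVec_transpose]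
  have hIM : (1 - M).PosDef := by
    have h1M : 1 - M = ε • (G * A⁻¹ * Gᵀ) := by rw [hM]; abel
    rw [h1M]
    refine PosDef.of_dotProduct_mulVec_pos ?_ (fun ⦃x⦄ hx => ?_)
    · unfold Matrix.IsHermitian
      rw [conjTranspose_eq_transpose_of_trivial, ← h1M, transpose_sub, transpose_one, hMsymm]
    · rw [star_trivial, smul_mulVec, dotProduct_smul, smul_eq_mul, hq]
      have hz : Gᵀ *ᵥ x ≠ 0 := fun h => hx (hGT x h)
      have := hA.inv.dotProduct_mulVec_pos hz
      rw [star_trivial] at this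
      exact mul_pos hε this
  -- M is positive definite
  have hMpos : M.PosDef := by
    refine PosDef.of_dotProduct_mulVec_pos ?_ (fun ⦃x⦄ hx => ?_)
    · unfold Matrix.IsHermitian
      rw [conjTranspose_eq_transpose_of_trivial, hMsymm]
    · rw [star_trivial, hM, sub_mulVec, one_mulVec, dotProduct_sub,
        smul_mulVec, dotProduct_smul, smul_eq_mul, hq]
      obtain ⟨z, hzdef⟩ : ∃ z, Gᵀ *ᵥ x = z := ⟨_, rfl⟩
      rw [hzdef]
      obtain ⟨w, hwdef⟩ : ∃ w, A⁻¹ *ᵥ z = w := ⟨_, rfl⟩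
      rw [hwdef]
      have hAw : A *ᵥ w = z := by rw [← hwdef, mulVec_mulVec, hAinv, one_mulVec]
      have hzx : z ⬝ᵥ w = x ⬝ᵥ (G *ᵥ w) := by
        rw [← hzdef, mulVec_transpose, ← dotProduct_mulVec]
      have hexp2 : z ⬝ᵥ w = w ⬝ᵥ K *ᵥ w + ε * ((G *ᵥ w) ⬝ᵥ (G *ᵥ w)) := by
        conv_lhs => rw [← hAw, dotProduct_comm, hAdef]
        rw [add_mulVec, dotProduct_add, smul_mulVec, dotProduct_smul, smul_eq_mul,
          ← mulVec_mulVec, dotProduct_mulVec w Gᵀ, vecMul_transpose]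
      have hsq : 0 ≤ (x - ε • (G *ᵥ w)) ⬝ᵥ (x - ε • (G *ᵥ w)) := by
        have := dotProduct_star_self_nonneg (x - ε • (G *ᵥ w))
        rwa [star_trivial] at this
      have hexp : (x - ε • (G *ᵥ w)) ⬝ᵥ (x - ε • (G *ᵥ w))
          = x ⬝ᵥ x - 2 * ε * (x ⬝ᵥ (G *ᵥ w)) + ε ^ 2 * ((G *ᵥ w) ⬝ᵥ (G *ᵥ w)) := by
        simp only [sub_dotProduct, dotProduct_sub, smul_dotProduct, dotProduct_smul,
          smul_eq_mul]
        rw [dotProduct_comm (G *ᵥ w) x]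
        ring
      have hgg : 0 ≤ (G *ᵥ w) ⬝ᵥ (G *ᵥ w) := by
        have := dotProduct_star_self_nonneg (G *ᵥ w)
        rwa [star_trivial] at this
      rcases eq_or_ne w 0 with hw0 | hw0
      · exfalso
        apply hx
        apply hGT
        rw [hzdef, ← hAw, hw0, mulVec_zero]
      · have hKw' : 0 < w ⬝ᵥ K *ᵥ w := by
          have := hK.dotProduct_mulVec_pos hw0
          rwa [star_trivial] at this
        nlinarith [hsq, hexp, hexp2, hzx]
  -- spectral part
  intro μ hμ
  have hdetC : det ((μ • 1 : Matrix (Fin m) (Fin m) ℂ) - M.map Complex.ofReal) = 0 := by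
    rw [spectrum.mem_iff, Algebra.algebraMap_eq_smul_one] at hμ
    by_contra hd
    exact hμ ((isUnit_iff_isUnit_det _).mpr (isUnit_iff_ne_zero.mpr hd))
  obtain ⟨v, hv, hveq⟩ := (exists_mulVec_eq_zero_iff).mpr hdetC
  have heig : (M.map Complex.ofReal) *ᵥ v = μ • v := by
    have := hveq
    rw [sub_mulVec, sub_eq_zero] at this
    rw [← this, smul_mulVec, one_mulVec]
  -- M.map is Hermitian
  have hherm : (M.map Complex.ofReal)ᴴ = M.map Complex.ofReal := by
    ext i j
    simp only [conjTranspose_apply, map_apply, Complex.star_def, Complex.conj_ofReal]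
    norm_cast
    conv_lhs => rw [← transpose_apply M i j, hMsymm]
  -- μ is real
  set s : ℂ := star v ⬝ᵥ v with hsdef
  have hs0 : s ≠ 0 := fun h => hv (dotProduct_star_self_eq_zero.mp h)
  have hsreal : star s = s := by
    rw [hsdef]; exact (star_dotProduct v v).symm
  have hqreal : star (star v ⬝ᵥ (M.map Complex.ofReal) *ᵥ v)
      = star v ⬝ᵥ (M.map Complex.ofReal) *ᵥ v :=
    calc star (star v ⬝ᵥ (M.map Complex.ofReal) *ᵥ v)
        = star ((M.map Complex.ofReal) *ᵥ v) ⬝ᵥ v := (star_dotProduct _ _).symm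
      _ = (star v ᵥ* (M.map Complex.ofReal)ᴴ) ⬝ᵥ v := by rw [star_mulVec]
      _ = star v ⬝ᵥ (M.map Complex.ofReal)ᴴ *ᵥ v := (dotProduct_mulVec _ _ _).symm
      _ = star v ⬝ᵥ (M.map Complex.ofReal) *ᵥ v := by rw [hherm]
  have hμreal : star μ = μ := by
    have h1 : star v ⬝ᵥ (M.map Complex.ofReal) *ᵥ v = μ * s := by
      rw [heig, dotProduct_smul, smul_eq_mul]
    rw [h1, star_mul', hsreal] at hqreal
    exact mul_right_cancel₀ hs0 (by rwa [mul_comm (star μ) s, mul_comm] at hqreal)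
  obtain ⟨r, hr⟩ : ∃ r : ℝ, μ = (r : ℂ) :=
    ⟨μ.re, Complex.conj_eq_iff_re.mp hμreal ▸ rfl⟩
  -- transfer determinant to ℝ
  have hmapeq : ((r • 1 : Matrix (Fin m) (Fin m) ℝ) - M).map Complex.ofReal
      = (μ • 1 : Matrix (Fin m) (Fin m) ℂ) - M.map Complex.ofReal := by
    ext i j
    simp only [map_apply, Matrix.sub_apply, Matrix.smul_apply, one_apply, smul_eq_mul, hr]
    split_ifs <;> push_cast <;> ring
  have hdetR : det ((r • 1 : Matrix (Fin m) (Fin m) ℝ) - M) = 0 := by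
    have h0 := Complex.ofRealHom.map_det ((r • 1 : Matrix (Fin m) (Fin m) ℝ) - M)
    rw [RingHom.mapMatrix_apply] at h0
    have h2 : ((r • 1 : Matrix (Fin m) (Fin m) ℝ) - M).map ⇑Complex.ofRealHom
        = (μ • 1 : Matrix (Fin m) (Fin m) ℂ) - M.map Complex.ofReal := hmapeq
    rw [h2, hdetC] at h0
    exact Complex.ofReal_eq_zero.mp h0
  obtain ⟨w, hw, hweq⟩ := (exists_mulVec_eq_zero_iff).mpr hdetR
  have heigR : M *ᵥ w = r • w := by
    rw [sub_mulVec, sub_eq_zero] at hweq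
    rw [← hweq, smul_mulVec, one_mulVec]
  have hww : 0 < w ⬝ᵥ w := by
    rcases (dotProduct_star_self_nonneg w).lt_or_eq with h | h
    · rwa [star_trivial] at h
    · exact absurd (dotProduct_star_self_eq_zero.mp h.symm) hw
  have h1 : 0 < r * (w ⬝ᵥ w) := by
    have := hMpos.dotProduct_mulVec_pos hw
    rwa [star_trivial, heigR, dotProduct_smul, smul_eq_mul] at this
  have h2 : 0 < w ⬝ᵥ w - r * (w ⬝ᵥ w) := by
    have := hIM.dotProduct_mulVec_pos hw
    rwa [star_trivial, sub_mulVec, one_mulVec, heigR, dotProduct_sub, dotProduct_smul,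
      smul_eq_mul] at this
  have hr0 : 0 < r := by by_contra h; push_neg at h; nlinarith
  have hr1 : r < 1 := by nlinarith
  rw [hr, Complex.norm_real, Real.norm_eq_abs, abs_of_pos hr0]
  exact hr1
end
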